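/- Let P be an associative 3-plane and let u, v, w, y ∈ P. Then the matrices u ∧ v and Ψ_{wy} commute: [u ∧ v, Ψ_{wy}] = 0. -/

import Mathlib

open scoped BigOperators RealInnerProductSpace Matrix

noncomputable section

/-- Euclidean 7-space. -/
abbrev E7 := EuclideanSpace ℝ (Fin 7)

/-- Kronecker delta. -/
def kd (i j : Fin 7) : ℝ := if i = j then 1 else 0

/-- The totally antisymmetric 3-array with value 1 at `(a,b,c)` (for distinct `a,b,c`). -/
def tripleForm (a b c i j k : Fin 7) : ℝ :=
  kd i a * (kd j b * kd k c - kd j c * kd k b)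
  - kd i b * (kd j a * kd k c - kd j c * kd k a)
  + kd i c * (kd j a * kd k b - kd j b * kd k a)

/-- The G₂ 3-form `φ` on `ℝ⁷` (indices 0-based: φ₁₂₃ = φ(0,1,2) etc.). -/
def phi7 (i j k : Fin 7) : ℝ :=
  tripleForm 0 1 2 i j k + tripleForm 0 3 4 i j k + tripleForm 1 3 5 i j k
  + tripleForm 2 3 6 i j k + tripleForm 1 4 6 i j k
  - tripleForm 2 4 5 i j k - tripleForm 0 5 6 i j k

/-- The totally antisymmetric 4-array with value 1 at `(a,b,c,d)` (for distinct `a,b,c,d`). -/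
def quadForm (a b c d i j k l : Fin 7) : ℝ :=
  Matrix.det !![kd i a, kd i b, kd i c, kd i d;
                kd j a, kd j b, kd j c, kd j d;
                kd k a, kd k b, kd k c, kd k d;
                kd l a, kd l b, kd l c, kd l d]

/-- The 4-form `ψ = ⋆φ` on `ℝ⁷` (indices 0-based). -/
def psi7 (i j k l : Fin 7) : ℝ :=
  quadForm 3 4 5 6 i j k l + quadForm 0 2 3 5 i j k l + quadForm 1 2 5 6 i j k l
  + quadForm 0 2 4 6 i j k l + quadForm 0 1 4 5 i j k l
  - quadForm 1 2 3 4 i j k l - quadForm 0 1 3 6 i j k l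

/-- The cross product on `ℝ⁷`: `(u × v)_k = Σ_{p,q} u_p v_q φ(p,q,k)`. -/
def crossE (u v : E7) : E7 := WithLp.toLp 2 (fun k => ∑ p, ∑ q, u p * v q * phi7 p q k)

/-- The matrix `u ⌟ φ`, with entries `(u ⌟ φ)(i,j) = Σ_p u_p φ(p,i,j)`. -/
def contractPhi (u : E7) : Matrix (Fin 7) (Fin 7) ℝ :=
  Matrix.of fun i j => ∑ p, u p * phi7 p i j

/-- The matrix `u ∧ v`, with entries `u_i v_j - u_j v_i`. -/
def wedgeM (u v : E7) : Matrix (Fin 7) (Fin 7) ℝ :=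
  Matrix.of fun i j => u i * v j - u j * v i

/-- The matrix `Ψ_{uv}`, with entries `Σ_{p,q} u_p v_q ψ(p,q,i,j)`. -/
def PsiM (u v : E7) : Matrix (Fin 7) (Fin 7) ℝ :=
  Matrix.of fun i j => ∑ p, ∑ q, u p * v q * psi7 p q i j

/-- Evaluation of a matrix as a bilinear form: `X(u,v) = Σ_{i,j} u_i v_j X(i,j)`. -/
def Xform (X : Matrix (Fin 7) (Fin 7) ℝ) (u v : E7) : ℝ := ∑ i, ∑ j, u i * v j * X i j

/-- `X.mulVec v` as a map `E7 → E7`. -/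
def mulVecE (X : Matrix (Fin 7) (Fin 7) ℝ) (v : E7) : E7 := WithLp.toLp 2 (fun i => ∑ j, X i j * v j)

/-- A skew-symmetric matrix is of type `Λ²₁₄` (i.e. lies in 𝔤₂). -/
def IsType14 (X : Matrix (Fin 7) (Fin 7) ℝ) : Prop :=
  ∀ i j k : Fin 7, ∑ p, (X i p * phi7 p j k + X j p * phi7 i p k + X k p * phi7 i j p) = 0

/-- A G₂-adapted frame: an orthonormal basis `e₁,…,e₇` with
`e₃ = e₁ × e₂`, `e₅ = e₁ × e₄`, `e₆ = e₂ × e₄`, `e₇ = e₃ × e₄` (0-based indices). -/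
def IsG2Frame (e : Fin 7 → E7) : Prop :=
  Orthonormal ℝ e ∧ e 2 = crossE (e 0) (e 1) ∧ e 4 = crossE (e 0) (e 3)
  ∧ e 5 = crossE (e 1) (e 3) ∧ e 6 = crossE (e 2) (e 3)

/-- An associative 3-plane: a 3-dimensional subspace closed under the cross product. -/
def IsAssociative (P : Submodule ℝ E7) : Prop :=
  Module.finrank ℝ P = 3 ∧ ∀ u ∈ P, ∀ v ∈ P, crossE u v ∈ P


lemma kd_dot (p s : Fin 7) : ∑ m, kd p m * kd s m = kd p s := by
  simp [kd, ite_mul, mul_ite, Finset.sum_ite_eq, eq_comm]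

lemma kd_00 : kd 0 0 = 1 := by simp +decide [kd]
lemma kd_01 : kd 0 1 = 0 := by simp +decide [kd]
lemma kd_02 : kd 0 2 = 0 := by simp +decide [kd]
lemma kd_03 : kd 0 3 = 0 := by simp +decide [kd]
lemma kd_04 : kd 0 4 = 0 := by simp +decide [kd]
lemma kd_05 : kd 0 5 = 0 := by simp +decide [kd]
lemma kd_06 : kd 0 6 = 0 := by simp +decide [kd]
lemma kd_10 : kd 1 0 = 0 := by simp +decide [kd]
lemma kd_11 : kd 1 1 = 1 := by simp +decide [kd]
lemma kd_12 : kd 1 2 = 0 := by simp +decide [kd]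
lemma kd_13 : kd 1 3 = 0 := by simp +decide [kd]
lemma kd_14 : kd 1 4 = 0 := by simp +decide [kd]
lemma kd_15 : kd 1 5 = 0 := by simp +decide [kd]
lemma kd_16 : kd 1 6 = 0 := by simp +decide [kd]
lemma kd_20 : kd 2 0 = 0 := by simp +decide [kd]
lemma kd_21 : kd 2 1 = 0 := by simp +decide [kd]
lemma kd_22 : kd 2 2 = 1 := by simp +decide [kd]
lemma kd_23 : kd 2 3 = 0 := by simp +decide [kd]
lemma kd_24 : kd 2 4 = 0 := by simp +decide [kd]
lemma kd_25 : kd 2 5 = 0 := by simp +decide [kd]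
lemma kd_26 : kd 2 6 = 0 := by simp +decide [kd]
lemma kd_30 : kd 3 0 = 0 := by simp +decide [kd]
lemma kd_31 : kd 3 1 = 0 := by simp +decide [kd]
lemma kd_32 : kd 3 2 = 0 := by simp +decide [kd]
lemma kd_33 : kd 3 3 = 1 := by simp +decide [kd]
lemma kd_34 : kd 3 4 = 0 := by simp +decide [kd]
lemma kd_35 : kd 3 5 = 0 := by simp +decide [kd]
lemma kd_36 : kd 3 6 = 0 := by simp +decide [kd]
lemma kd_40 : kd 4 0 = 0 := by simp +decide [kd]
lemma kd_41 : kd 4 1 = 0 := by simp +decide [kd]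
lemma kd_42 : kd 4 2 = 0 := by simp +decide [kd]
lemma kd_43 : kd 4 3 = 0 := by simp +decide [kd]
lemma kd_44 : kd 4 4 = 1 := by simp +decide [kd]
lemma kd_45 : kd 4 5 = 0 := by simp +decide [kd]
lemma kd_46 : kd 4 6 = 0 := by simp +decide [kd]
lemma kd_50 : kd 5 0 = 0 := by simp +decide [kd]
lemma kd_51 : kd 5 1 = 0 := by simp +decide [kd]
lemma kd_52 : kd 5 2 = 0 := by simp +decide [kd]
lemma kd_53 : kd 5 3 = 0 := by simp +decide [kd]
lemma kd_54 : kd 5 4 = 0 := by simp +decide [kd]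
lemma kd_55 : kd 5 5 = 1 := by simp +decide [kd]
lemma kd_56 : kd 5 6 = 0 := by simp +decide [kd]
lemma kd_60 : kd 6 0 = 0 := by simp +decide [kd]
lemma kd_61 : kd 6 1 = 0 := by simp +decide [kd]
lemma kd_62 : kd 6 2 = 0 := by simp +decide [kd]
lemma kd_63 : kd 6 3 = 0 := by simp +decide [kd]
lemma kd_64 : kd 6 4 = 0 := by simp +decide [kd]
lemma kd_65 : kd 6 5 = 0 := by simp +decide [kd]
lemma kd_66 : kd 6 6 = 1 := by simp +decide [kd]

lemma phi7_r0 (p r : Fin 7) : phi7 p r 0 = kd p 1 * kd r 2 - kd p 2 * kd r 1 + kd p 3 * kd r 4 - kd p 4 * kd r 3 - kd p 5 * kd r 6 + kd p 6 * kd r 5 := by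
  simp only [phi7, tripleForm, kd_00, kd_01, kd_02, kd_03, kd_04, kd_05, kd_06, kd_10, kd_11, kd_12, kd_13, kd_14, kd_15, kd_16, kd_20, kd_21, kd_22, kd_23, kd_24, kd_25, kd_26, kd_30, kd_31, kd_32, kd_33, kd_34, kd_35, kd_36, kd_40, kd_41, kd_42, kd_43, kd_44, kd_45, kd_46, kd_50, kd_51, kd_52, kd_53, kd_54, kd_55, kd_56, kd_60, kd_61, kd_62, kd_63, kd_64, kd_65, kd_66]
  ring

lemma phi7_r1 (p r : Fin 7) : phi7 p r 1 = -kd p 0 * kd r 2 + kd p 2 * kd r 0 + kd p 3 * kd r 5 + kd p 4 * kd r 6 - kd p 5 * kd r 3 - kd p 6 * kd r 4 := by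
  simp only [phi7, tripleForm, kd_00, kd_01, kd_02, kd_03, kd_04, kd_05, kd_06, kd_10, kd_11, kd_12, kd_13, kd_14, kd_15, kd_16, kd_20, kd_21, kd_22, kd_23, kd_24, kd_25, kd_26, kd_30, kd_31, kd_32, kd_33, kd_34, kd_35, kd_36, kd_40, kd_41, kd_42, kd_43, kd_44, kd_45, kd_46, kd_50, kd_51, kd_52, kd_53, kd_54, kd_55, kd_56, kd_60, kd_61, kd_62, kd_63, kd_64, kd_65, kd_66]
  ring

lemma phi7_r2 (p r : Fin 7) : phi7 p r 2 = kd p 0 * kd r 1 - kd p 1 * kd r 0 + kd p 3 * kd r 6 - kd p 4 * kd r 5 + kd p 5 * kd r 4 - kd p 6 * kd r 3 := by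
  simp only [phi7, tripleForm, kd_00, kd_01, kd_02, kd_03, kd_04, kd_05, kd_06, kd_10, kd_11, kd_12, kd_13, kd_14, kd_15, kd_16, kd_20, kd_21, kd_22, kd_23, kd_24, kd_25, kd_26, kd_30, kd_31, kd_32, kd_33, kd_34, kd_35, kd_36, kd_40, kd_41, kd_42, kd_43, kd_44, kd_45, kd_46, kd_50, kd_51, kd_52, kd_53, kd_54, kd_55, kd_56, kd_60, kd_61, kd_62, kd_63, kd_64, kd_65, kd_66]
  ring

lemma phi7_r3 (p r : Fin 7) : phi7 p r 3 = -kd p 0 * kd r 4 - kd p 1 * kd r 5 - kd p 2 * kd r 6 + kd p 4 * kd r 0 + kd p 5 * kd r 1 + kd p 6 * kd r 2 := by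
  simp only [phi7, tripleForm, kd_00, kd_01, kd_02, kd_03, kd_04, kd_05, kd_06, kd_10, kd_11, kd_12, kd_13, kd_14, kd_15, kd_16, kd_20, kd_21, kd_22, kd_23, kd_24, kd_25, kd_26, kd_30, kd_31, kd_32, kd_33, kd_34, kd_35, kd_36, kd_40, kd_41, kd_42, kd_43, kd_44, kd_45, kd_46, kd_50, kd_51, kd_52, kd_53, kd_54, kd_55, kd_56, kd_60, kd_61, kd_62, kd_63, kd_64, kd_65, kd_66]
  ring

lemma phi7_r4 (p r : Fin 7) : phi7 p r 4 = kd p 0 * kd r 3 - kd p 1 * kd r 6 + kd p 2 * kd r 5 - kd p 3 * kd r 0 - kd p 5 * kd r 2 + kd p 6 * kd r 1 := by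
  simp only [phi7, tripleForm, kd_00, kd_01, kd_02, kd_03, kd_04, kd_05, kd_06, kd_10, kd_11, kd_12, kd_13, kd_14, kd_15, kd_16, kd_20, kd_21, kd_22, kd_23, kd_24, kd_25, kd_26, kd_30, kd_31, kd_32, kd_33, kd_34, kd_35, kd_36, kd_40, kd_41, kd_42, kd_43, kd_44, kd_45, kd_46, kd_50, kd_51, kd_52, kd_53, kd_54, kd_55, kd_56, kd_60, kd_61, kd_62, kd_63, kd_64, kd_65, kd_66]
  ring

lemma phi7_r5 (p r : Fin 7) : phi7 p r 5 = kd p 0 * kd r 6 + kd p 1 * kd r 3 - kd p 2 * kd r 4 - kd p 3 * kd r 1 + kd p 4 * kd r 2 - kd p 6 * kd r 0 := by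
  simp only [phi7, tripleForm, kd_00, kd_01, kd_02, kd_03, kd_04, kd_05, kd_06, kd_10, kd_11, kd_12, kd_13, kd_14, kd_15, kd_16, kd_20, kd_21, kd_22, kd_23, kd_24, kd_25, kd_26, kd_30, kd_31, kd_32, kd_33, kd_34, kd_35, kd_36, kd_40, kd_41, kd_42, kd_43, kd_44, kd_45, kd_46, kd_50, kd_51, kd_52, kd_53, kd_54, kd_55, kd_56, kd_60, kd_61, kd_62, kd_63, kd_64, kd_65, kd_66]
  ring

lemma phi7_r6 (p r : Fin 7) : phi7 p r 6 = -kd p 0 * kd r 5 + kd p 1 * kd r 4 + kd p 2 * kd r 3 - kd p 3 * kd r 2 - kd p 4 * kd r 1 + kd p 5 * kd r 0 := by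
  simp only [phi7, tripleForm, kd_00, kd_01, kd_02, kd_03, kd_04, kd_05, kd_06, kd_10, kd_11, kd_12, kd_13, kd_14, kd_15, kd_16, kd_20, kd_21, kd_22, kd_23, kd_24, kd_25, kd_26, kd_30, kd_31, kd_32, kd_33, kd_34, kd_35, kd_36, kd_40, kd_41, kd_42, kd_43, kd_44, kd_45, kd_46, kd_50, kd_51, kd_52, kd_53, kd_54, kd_55, kd_56, kd_60, kd_61, kd_62, kd_63, kd_64, kd_65, kd_66]
  ring

lemma phi7_l0 (s j : Fin 7) : phi7 0 s j = kd s 1 * kd j 2 - kd s 2 * kd j 1 + kd s 3 * kd j 4 - kd s 4 * kd j 3 - kd s 5 * kd j 6 + kd s 6 * kd j 5 := by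
  simp only [phi7, tripleForm, kd_00, kd_01, kd_02, kd_03, kd_04, kd_05, kd_06, kd_10, kd_11, kd_12, kd_13, kd_14, kd_15, kd_16, kd_20, kd_21, kd_22, kd_23, kd_24, kd_25, kd_26, kd_30, kd_31, kd_32, kd_33, kd_34, kd_35, kd_36, kd_40, kd_41, kd_42, kd_43, kd_44, kd_45, kd_46, kd_50, kd_51, kd_52, kd_53, kd_54, kd_55, kd_56, kd_60, kd_61, kd_62, kd_63, kd_64, kd_65, kd_66]
  ring

lemma phi7_l1 (s j : Fin 7) : phi7 1 s j = -kd s 0 * kd j 2 + kd s 2 * kd j 0 + kd s 3 * kd j 5 + kd s 4 * kd j 6 - kd s 5 * kd j 3 - kd s 6 * kd j 4 := by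
  simp only [phi7, tripleForm, kd_00, kd_01, kd_02, kd_03, kd_04, kd_05, kd_06, kd_10, kd_11, kd_12, kd_13, kd_14, kd_15, kd_16, kd_20, kd_21, kd_22, kd_23, kd_24, kd_25, kd_26, kd_30, kd_31, kd_32, kd_33, kd_34, kd_35, kd_36, kd_40, kd_41, kd_42, kd_43, kd_44, kd_45, kd_46, kd_50, kd_51, kd_52, kd_53, kd_54, kd_55, kd_56, kd_60, kd_61, kd_62, kd_63, kd_64, kd_65, kd_66]
  ring

lemma phi7_l2 (s j : Fin 7) : phi7 2 s j = kd s 0 * kd j 1 - kd s 1 * kd j 0 + kd s 3 * kd j 6 - kd s 4 * kd j 5 + kd s 5 * kd j 4 - kd s 6 * kd j 3 := by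
  simp only [phi7, tripleForm, kd_00, kd_01, kd_02, kd_03, kd_04, kd_05, kd_06, kd_10, kd_11, kd_12, kd_13, kd_14, kd_15, kd_16, kd_20, kd_21, kd_22, kd_23, kd_24, kd_25, kd_26, kd_30, kd_31, kd_32, kd_33, kd_34, kd_35, kd_36, kd_40, kd_41, kd_42, kd_43, kd_44, kd_45, kd_46, kd_50, kd_51, kd_52, kd_53, kd_54, kd_55, kd_56, kd_60, kd_61, kd_62, kd_63, kd_64, kd_65, kd_66]
  ring

lemma phi7_l3 (s j : Fin 7) : phi7 3 s j = -kd s 0 * kd j 4 - kd s 1 * kd j 5 - kd s 2 * kd j 6 + kd s 4 * kd j 0 + kd s 5 * kd j 1 + kd s 6 * kd j 2 := by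
  simp only [phi7, tripleForm, kd_00, kd_01, kd_02, kd_03, kd_04, kd_05, kd_06, kd_10, kd_11, kd_12, kd_13, kd_14, kd_15, kd_16, kd_20, kd_21, kd_22, kd_23, kd_24, kd_25, kd_26, kd_30, kd_31, kd_32, kd_33, kd_34, kd_35, kd_36, kd_40, kd_41, kd_42, kd_43, kd_44, kd_45, kd_46, kd_50, kd_51, kd_52, kd_53, kd_54, kd_55, kd_56, kd_60, kd_61, kd_62, kd_63, kd_64, kd_65, kd_66]
  ring

lemma phi7_l4 (s j : Fin 7) : phi7 4 s j = kd s 0 * kd j 3 - kd s 1 * kd j 6 + kd s 2 * kd j 5 - kd s 3 * kd j 0 - kd s 5 * kd j 2 + kd s 6 * kd j 1 := by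
  simp only [phi7, tripleForm, kd_00, kd_01, kd_02, kd_03, kd_04, kd_05, kd_06, kd_10, kd_11, kd_12, kd_13, kd_14, kd_15, kd_16, kd_20, kd_21, kd_22, kd_23, kd_24, kd_25, kd_26, kd_30, kd_31, kd_32, kd_33, kd_34, kd_35, kd_36, kd_40, kd_41, kd_42, kd_43, kd_44, kd_45, kd_46, kd_50, kd_51, kd_52, kd_53, kd_54, kd_55, kd_56, kd_60, kd_61, kd_62, kd_63, kd_64, kd_65, kd_66]
  ring

lemma phi7_l5 (s j : Fin 7) : phi7 5 s j = kd s 0 * kd j 6 + kd s 1 * kd j 3 - kd s 2 * kd j 4 - kd s 3 * kd j 1 + kd s 4 * kd j 2 - kd s 6 * kd j 0 := by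
  simp only [phi7, tripleForm, kd_00, kd_01, kd_02, kd_03, kd_04, kd_05, kd_06, kd_10, kd_11, kd_12, kd_13, kd_14, kd_15, kd_16, kd_20, kd_21, kd_22, kd_23, kd_24, kd_25, kd_26, kd_30, kd_31, kd_32, kd_33, kd_34, kd_35, kd_36, kd_40, kd_41, kd_42, kd_43, kd_44, kd_45, kd_46, kd_50, kd_51, kd_52, kd_53, kd_54, kd_55, kd_56, kd_60, kd_61, kd_62, kd_63, kd_64, kd_65, kd_66]
  ring

lemma phi7_l6 (s j : Fin 7) : phi7 6 s j = -kd s 0 * kd j 5 + kd s 1 * kd j 4 + kd s 2 * kd j 3 - kd s 3 * kd j 2 - kd s 4 * kd j 1 + kd s 5 * kd j 0 := by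
  simp only [phi7, tripleForm, kd_00, kd_01, kd_02, kd_03, kd_04, kd_05, kd_06, kd_10, kd_11, kd_12, kd_13, kd_14, kd_15, kd_16, kd_20, kd_21, kd_22, kd_23, kd_24, kd_25, kd_26, kd_30, kd_31, kd_32, kd_33, kd_34, kd_35, kd_36, kd_40, kd_41, kd_42, kd_43, kd_44, kd_45, kd_46, kd_50, kd_51, kd_52, kd_53, kd_54, kd_55, kd_56, kd_60, kd_61, kd_62, kd_63, kd_64, kd_65, kd_66]
  ring

lemma det_fin_four {R : Type*} [CommRing R] (A : Matrix (Fin 4) (Fin 4) R) :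
    A.det =
      A 0 0 * (A 1 1 * (A 2 2 * A 3 3 - A 2 3 * A 3 2) - A 1 2 * (A 2 1 * A 3 3 - A 2 3 * A 3 1) + A 1 3 * (A 2 1 * A 3 2 - A 2 2 * A 3 1))
    - A 0 1 * (A 1 0 * (A 2 2 * A 3 3 - A 2 3 * A 3 2) - A 1 2 * (A 2 0 * A 3 3 - A 2 3 * A 3 0) + A 1 3 * (A 2 0 * A 3 2 - A 2 2 * A 3 0))
    + A 0 2 * (A 1 0 * (A 2 1 * A 3 3 - A 2 3 * A 3 1) - A 1 1 * (A 2 0 * A 3 3 - A 2 3 * A 3 0) + A 1 3 * (A 2 0 * A 3 1 - A 2 1 * A 3 0))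
    - A 0 3 * (A 1 0 * (A 2 1 * A 3 2 - A 2 2 * A 3 1) - A 1 1 * (A 2 0 * A 3 2 - A 2 2 * A 3 0) + A 1 2 * (A 2 0 * A 3 1 - A 2 1 * A 3 0)) := by
  rw [Matrix.det_succ_row_zero, Fin.sum_univ_four]
  simp +decide [Matrix.det_fin_three, Matrix.submatrix_apply, Fin.succAbove, Fin.lt_def,
    show (Fin.succ 0 : Fin 4) = 1 from rfl, show (Fin.succ 1 : Fin 4) = 2 from rfl,
    show (Fin.succ 2 : Fin 4) = 3 from rfl, show (Fin.castSucc 0 : Fin 4) = 0 from rfl,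
    show (Fin.castSucc 1 : Fin 4) = 1 from rfl, show (Fin.castSucc 2 : Fin 4) = 2 from rfl]
  ring

lemma quadForm_expand (a b c d i j k l : Fin 7) :
    quadForm a b c d i j k l =
      kd i a * (kd j b * (kd k c * kd l d - kd k d * kd l c) - kd j c * (kd k b * kd l d - kd k d * kd l b) + kd j d * (kd k b * kd l c - kd k c * kd l b))
    - kd i b * (kd j a * (kd k c * kd l d - kd k d * kd l c) - kd j c * (kd k a * kd l d - kd k d * kd l a) + kd j d * (kd k a * kd l c - kd k c * kd l a))
    + kd i c * (kd j a * (kd k b * kd l d - kd k d * kd l b) - kd j b * (kd k a * kd l d - kd k d * kd l a) + kd j d * (kd k a * kd l b - kd k b * kd l a))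
    - kd i d * (kd j a * (kd k b * kd l c - kd k c * kd l b) - kd j b * (kd k a * kd l c - kd k c * kd l a) + kd j c * (kd k a * kd l b - kd k b * kd l a)) := by
  rw [quadForm, det_fin_four]
  rfl

set_option maxHeartbeats 1000000 in
lemma contraction (p r s j : Fin 7) :
    ∑ q, phi7 p r q * phi7 q s j
      = kd p s * kd r j - kd p j * kd r s - psi7 p r s j := by
  rw [Fin.sum_univ_seven, ← kd_dot p s, ← kd_dot p j, ← kd_dot r j, ← kd_dot r s]
  simp only [psi7, quadForm_expand, Fin.sum_univ_seven,
    phi7_r0, phi7_r1, phi7_r2, phi7_r3, phi7_r4, phi7_r5, phi7_r6,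
    phi7_l0, phi7_l1, phi7_l2, phi7_l3, phi7_l4, phi7_l5, phi7_l6]
  ring

lemma psi7_swap12 (p q k l : Fin 7) : psi7 p q k l = - psi7 q p k l := by
  simp only [psi7, quadForm_expand]; ring
lemma psi7_swap13 (p q k l : Fin 7) : psi7 p q k l = - psi7 k q p l := by
  simp only [psi7, quadForm_expand]; ring
lemma psi7_swap23 (p q k l : Fin 7) : psi7 p q k l = - psi7 p k q l := by
  simp only [psi7, quadForm_expand]; ring
lemma psi7_swap14 (p q k l : Fin 7) : psi7 p q k l = - psi7 l q k p := by
  simp only [psi7, quadForm_expand]; ring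
lemma psi7_swap24 (p q k l : Fin 7) : psi7 p q k l = - psi7 p l k q := by
  simp only [psi7, quadForm_expand]; ring
lemma psi7_swap34 (p q k l : Fin 7) : psi7 p q k l = - psi7 p q l k := by
  simp only [psi7, quadForm_expand]; ring

-- sum helpers
lemma sum_antisym (f : Fin 7 → Fin 7 → ℝ) (h : ∀ a b, f a b = - f b a) :
    ∑ a, ∑ b, f a b = 0 := by
  have h3 : (∑ a, ∑ b, f a b) + (∑ a, ∑ b, f a b) = 0 := by
    nth_rewrite 1 [Finset.sum_comm]
    rw [← Finset.sum_add_distrib]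
    refine Finset.sum_eq_zero fun a _ => ?_
    rw [← Finset.sum_add_distrib]
    refine Finset.sum_eq_zero fun b _ => ?_
    rw [h b a]; ring
  linarith

def assocV (u v w : E7) : E7 := WithLp.toLp 2 (fun j => ∑ p, ∑ q, ∑ k, u p * v q * w k * psi7 p q k j)

lemma assocV_apply (u v w : E7) (j : Fin 7) :
    assocV u v w j = ∑ p, ∑ q, ∑ k, u p * v q * w k * psi7 p q k j := rfl

lemma assocV_self12 (u w : E7) : assocV u u w = 0 := by
  ext j
  show ∑ p, ∑ q, ∑ k, u p * u q * w k * psi7 p q k j = 0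
  refine sum_antisym _ fun a b => ?_
  rw [← Finset.sum_neg_distrib]
  refine Finset.sum_congr rfl fun k _ => ?_
  rw [psi7_swap12 a b k j]; ring

lemma assocV_self23 (u w : E7) : assocV u w w = 0 := by
  ext j
  show ∑ p, ∑ q, ∑ k, u p * w q * w k * psi7 p q k j = 0
  refine Finset.sum_eq_zero fun p _ => ?_
  refine sum_antisym _ fun a b => ?_
  rw [psi7_swap23 p a b j]; ring

lemma assocV_self13 (u w : E7) : assocV u w u = 0 := by
  ext j
  show ∑ p, ∑ q, ∑ k, u p * w q * u k * psi7 p q k j = 0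
  rw [Finset.sum_comm]
  refine Finset.sum_eq_zero fun q _ => ?_
  refine sum_antisym _ fun a b => ?_
  rw [psi7_swap13 a q b j]; ring

def psi4 (u v w z : E7) : ℝ :=
  ∑ l, ∑ p, ∑ q, ∑ k, u p * v q * w k * psi7 p q k l * z l

lemma dot_assocV (u v w x : E7) :
    ∑ l, assocV u v w l * x l = psi4 u v w x := by
  unfold psi4
  refine Finset.sum_congr rfl fun l _ => ?_
  rw [assocV_apply]
  simp only [Finset.sum_mul]

lemma psi4_self14 (u v w : E7) : psi4 u v w u = 0 := by
  unfold psi4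
  refine sum_antisym _ fun a b => ?_
  rw [← Finset.sum_neg_distrib]
  refine Finset.sum_congr rfl fun q _ => ?_
  rw [← Finset.sum_neg_distrib]
  refine Finset.sum_congr rfl fun k _ => ?_
  rw [psi7_swap14 b q k a]; ring

lemma psi4_self24 (u v w : E7) : psi4 u v w v = 0 := by
  unfold psi4
  rw [Finset.sum_comm]
  refine Finset.sum_eq_zero fun p _ => ?_
  refine sum_antisym _ fun a b => ?_
  rw [← Finset.sum_neg_distrib]
  refine Finset.sum_congr rfl fun k _ => ?_
  rw [psi7_swap24 p b k a]; ring

lemma psi4_self34 (u v w : E7) : psi4 u v w w = 0 := by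
  unfold psi4
  rw [Finset.sum_comm]
  refine Finset.sum_eq_zero fun p _ => ?_
  rw [Finset.sum_comm]
  refine Finset.sum_eq_zero fun q _ => ?_
  refine sum_antisym _ fun a b => ?_
  rw [psi7_swap34 p q b a]; ring

lemma sum_rot3 {M : Type*} [AddCommMonoid M] (g : Fin 7 → Fin 7 → Fin 7 → M) :
    ∑ a, ∑ p, ∑ q, g a p q = ∑ p, ∑ q, ∑ a, g a p q := by
  rw [Finset.sum_comm]
  exact Finset.sum_congr rfl fun p _ => Finset.sum_comm

lemma sum_rot4 {M : Type*} [AddCommMonoid M] (g : Fin 7 → Fin 7 → Fin 7 → Fin 7 → M) :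
    ∑ a, ∑ b, ∑ p, ∑ q, g a b p q = ∑ b, ∑ p, ∑ q, ∑ a, g a b p q := by
  rw [Finset.sum_comm]
  exact Finset.sum_congr rfl fun b _ => sum_rot3 _

lemma sum4_reorder {M : Type*} [AddCommMonoid M] (f : Fin 7 → Fin 7 → Fin 7 → Fin 7 → M) :
    ∑ a, ∑ b, ∑ p, ∑ q, f a b p q = ∑ p, ∑ q, ∑ b, ∑ a, f a b p q := by
  calc ∑ a, ∑ b, ∑ p, ∑ q, f a b p q
      = ∑ b, ∑ p, ∑ q, ∑ a, f a b p q := sum_rot4 f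
    _ = ∑ p, ∑ q, ∑ a, ∑ b, f a b p q := sum_rot4 (fun b p q a => f a b p q)
    _ = ∑ p, ∑ q, ∑ b, ∑ a, f a b p q :=
        Finset.sum_congr rfl fun p _ => Finset.sum_congr rfl fun q _ => Finset.sum_comm

lemma crossE_cross (u v w : E7) (j : Fin 7) :
    crossE (crossE u v) w j
      = (∑ i, u i * w i) * v j - (∑ i, v i * w i) * u j - assocV u v w j := by
  have h0 : crossE (crossE u v) w j
      = ∑ a, ∑ b, (∑ p, ∑ q, u p * v q * phi7 p q a) * w b * phi7 a b j := rfl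
  rw [h0]
  calc ∑ a, ∑ b, (∑ p, ∑ q, u p * v q * phi7 p q a) * w b * phi7 a b j
      = ∑ a, ∑ b, ∑ p, ∑ q, u p * v q * phi7 p q a * w b * phi7 a b j := by
        simp only [Finset.sum_mul]
    _ = ∑ p, ∑ q, ∑ b, ∑ a, u p * v q * phi7 p q a * w b * phi7 a b j :=
        sum4_reorder _
    _ = ∑ p, ∑ q, ∑ b, u p * v q * w b * ∑ a, phi7 p q a * phi7 a b j := by
        refine Finset.sum_congr rfl fun p _ => Finset.sum_congr rfl fun q _ =>
          Finset.sum_congr rfl fun b _ => ?_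
        rw [Finset.mul_sum]
        exact Finset.sum_congr rfl fun a _ => by ring
    _ = ∑ p, ∑ q, ∑ b, u p * v q * w b *
          (kd p b * kd q j - kd p j * kd q b - psi7 p q b j) := by
        simp only [contraction]
    _ = (∑ i, u i * w i) * v j - (∑ i, v i * w i) * u j - assocV u v w j := by
        rw [assocV_apply]
        simp only [mul_sub, Finset.sum_sub_distrib]
        congr 1
        · congr 1
          · simp [kd, mul_ite, ite_mul, mul_one, mul_zero, Finset.sum_ite_eq,
              Finset.sum_ite_eq', Finset.mem_univ, Finset.sum_mul]
            refine Finset.sum_congr rfl fun p _ => by ring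
          · simp [kd, mul_ite, ite_mul, mul_one, mul_zero, Finset.sum_ite_eq,
              Finset.sum_ite_eq', Finset.mem_univ, Finset.sum_mul]
            refine Finset.sum_congr rfl fun p _ => by ring

lemma fin3_cases : ∀ (i j k m : Fin 3), ¬ i = j → ¬ i = k → ¬ j = k → (m = i ∨ m = j ∨ m = k) := by
  decide

lemma assocV_eq_comb (u v w : E7) :
    assocV u v w = (∑ i, u i * w i) • v - (∑ i, v i * w i) • u - crossE (crossE u v) w := by
  ext j
  have := crossE_cross u v w j
  simp only [PiLp.sub_apply, PiLp.smul_apply, smul_eq_mul]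
  linarith

lemma assocV_mem (P : Submodule ℝ E7) (hP : IsAssociative P) {u v w : E7}
    (hu : u ∈ P) (hv : v ∈ P) (hw : w ∈ P) : assocV u v w ∈ P := by
  rw [assocV_eq_comb]
  exact P.sub_mem (P.sub_mem (P.smul_mem _ hv) (P.smul_mem _ hu))
    (hP.2 _ (hP.2 _ hu _ hv) _ hw)

-- linearity
lemma assocV_add1 (x y v w : E7) : assocV (x + y) v w = assocV x v w + assocV y v w := by
  ext j
  simp only [assocV, PiLp.add_apply, add_mul, Finset.sum_add_distrib]

lemma assocV_smul1 (c : ℝ) (x v w : E7) : assocV (c • x) v w = c • assocV x v w := by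
  ext j
  simp only [assocV, PiLp.smul_apply, smul_eq_mul, Finset.mul_sum]
  refine Finset.sum_congr rfl fun p _ => Finset.sum_congr rfl fun q _ =>
    Finset.sum_congr rfl fun k _ => by ring

lemma assocV_add2 (u x y w : E7) : assocV u (x + y) w = assocV u x w + assocV u y w := by
  ext j
  simp only [assocV, PiLp.add_apply, add_mul, mul_add, Finset.sum_add_distrib]

lemma assocV_smul2 (c : ℝ) (u x w : E7) : assocV u (c • x) w = c • assocV u x w := by
  ext j
  simp only [assocV, PiLp.smul_apply, smul_eq_mul, Finset.mul_sum]
  refine Finset.sum_congr rfl fun p _ => Finset.sum_congr rfl fun q _ =>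
    Finset.sum_congr rfl fun k _ => by ring

lemma assocV_add3 (u v x y : E7) : assocV u v (x + y) = assocV u v x + assocV u v y := by
  ext j
  simp only [assocV, PiLp.add_apply, add_mul, mul_add, Finset.sum_add_distrib]

lemma assocV_smul3 (c : ℝ) (u v x : E7) : assocV u v (c • x) = c • assocV u v x := by
  ext j
  simp only [assocV, PiLp.smul_apply, smul_eq_mul, Finset.mul_sum]
  refine Finset.sum_congr rfl fun p _ => Finset.sum_congr rfl fun q _ =>
    Finset.sum_congr rfl fun k _ => by ring

lemma assoc_vanish (P : Submodule ℝ E7) (hP : IsAssociative P) :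
    ∀ u ∈ P, ∀ v ∈ P, ∀ w ∈ P, assocV u v w = 0 := by
  obtain ⟨hdim, hcl⟩ := hP
  have : FiniteDimensional ℝ P := FiniteDimensional.finiteDimensional_submodule P
  let B : Module.Basis (Fin 3) ℝ P := Module.finBasisOfFinrankEq ℝ P hdim
  set e : Fin 3 → E7 := fun m => (B m : E7) with he
  have hem : ∀ m, e m ∈ P := fun m => (B m).2
  -- expansion of members of P
  have hexp : ∀ x, x ∈ P → ∃ a b c : ℝ, x = a • e 0 + b • e 1 + c • e 2 := by
    intro x hx
    refine ⟨B.repr ⟨x, hx⟩ 0, B.repr ⟨x, hx⟩ 1, B.repr ⟨x, hx⟩ 2, ?_⟩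
    have h := B.sum_repr ⟨x, hx⟩
    rw [Fin.sum_univ_three] at h
    have := congrArg (Subtype.val : P → E7) h
    simpa using this.symm
  -- vanishing on basis triples
  have hbasis : ∀ i j k : Fin 3, assocV (e i) (e j) (e k) = 0 := by
    intro i j k
    by_cases hij : i = j
    · subst hij; exact assocV_self12 _ _
    by_cases hik : i = k
    · subst hik; exact assocV_self13 _ _
    by_cases hjk : j = k
    · subst hjk; exact assocV_self23 _ _
    -- all distinct
    set z : E7 := assocV (e i) (e j) (e k) with hz
    have hzP : z ∈ P := assocV_mem P ⟨hdim, hcl⟩ (hem i) (hem j) (hem k)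
    have hdotz : ∀ m : Fin 3, ∑ l, z l * e m l = 0 := by
      intro m
      have hm : m = i ∨ m = j ∨ m = k := fin3_cases i j k m hij hik hjk
      rw [hz, dot_assocV]
      rcases hm with rfl | rfl | rfl
      · exact psi4_self14 _ _ _
      · exact psi4_self24 _ _ _
      · exact psi4_self34 _ _ _
    obtain ⟨a, b, c, habc⟩ := hexp z hzP
    have hzz : ∑ l, z l * z l = 0 := by
      nth_rewrite 2 [habc]
      simp only [PiLp.add_apply, PiLp.smul_apply, smul_eq_mul, mul_add, Finset.sum_add_distrib]
      have e0 := hdotz 0; have e1 := hdotz 1; have e2 := hdotz 2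
      have t0 : ∑ l, z l * (a * e 0 l) = a * ∑ l, z l * e 0 l := by
        rw [Finset.mul_sum]; exact Finset.sum_congr rfl fun l _ => by ring
      have t1 : ∑ l, z l * (b * e 1 l) = b * ∑ l, z l * e 1 l := by
        rw [Finset.mul_sum]; exact Finset.sum_congr rfl fun l _ => by ring
      have t2 : ∑ l, z l * (c * e 2 l) = c * ∑ l, z l * e 2 l := by
        rw [Finset.mul_sum]; exact Finset.sum_congr rfl fun l _ => by ring
      rw [t0, t1, t2, e0, e1, e2]; ring
    have hzl : ∀ l, z l = 0 := by
      intro l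
      have h1 : ∀ i ∈ Finset.univ, (0:ℝ) ≤ z i * z i := fun i _ => mul_self_nonneg _
      have := (Finset.sum_eq_zero_iff_of_nonneg h1).1 hzz l (Finset.mem_univ l)
      exact mul_self_eq_zero.1 this
    ext l
    exact hzl l
  -- general case by trilinearity
  intro u hu v hv w hw
  obtain ⟨a1, a2, a3, hu'⟩ := hexp u hu
  obtain ⟨b1, b2, b3, hv'⟩ := hexp v hv
  obtain ⟨c1, c2, c3, hw'⟩ := hexp w hw
  rw [hu', hv', hw']
  simp only [assocV_add1, assocV_add2, assocV_add3, assocV_smul1, assocV_smul2, assocV_smul3,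
    hbasis, smul_zero, add_zero, zero_add]

lemma psum_left (w y x : E7) (j : Fin 7) :
    ∑ k, x k * (∑ p, ∑ q, w p * y q * psi7 p q k j) = assocV w y x j := by
  rw [assocV_apply]
  calc ∑ k, x k * (∑ p, ∑ q, w p * y q * psi7 p q k j)
      = ∑ k, ∑ p, ∑ q, x k * (w p * y q * psi7 p q k j) := by
        simp only [Finset.mul_sum]
    _ = ∑ p, ∑ q, ∑ k, x k * (w p * y q * psi7 p q k j) := sum_rot3 _
    _ = ∑ p, ∑ q, ∑ k, w p * y q * x k * psi7 p q k j :=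
        Finset.sum_congr rfl fun p _ => Finset.sum_congr rfl fun q _ =>
          Finset.sum_congr rfl fun k _ => by ring

lemma psum_right (w y x : E7) (i : Fin 7) :
    ∑ k, (∑ p, ∑ q, w p * y q * psi7 p q i k) * x k = - assocV w y x i := by
  rw [assocV_apply]
  calc ∑ k, (∑ p, ∑ q, w p * y q * psi7 p q i k) * x k
      = ∑ k, ∑ p, ∑ q, w p * y q * psi7 p q i k * x k := by
        simp only [Finset.sum_mul]
    _ = ∑ p, ∑ q, ∑ k, w p * y q * psi7 p q i k * x k := sum_rot3 _
    _ = ∑ p, ∑ q, ∑ k, -(w p * y q * x k * psi7 p q k i) := by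
        refine Finset.sum_congr rfl fun p _ => Finset.sum_congr rfl fun q _ =>
          Finset.sum_congr rfl fun k _ => ?_
        rw [psi7_swap34 p q k i]; ring
    _ = - ∑ p, ∑ q, ∑ k, w p * y q * x k * psi7 p q k i := by
        simp only [Finset.sum_neg_distrib]



/-- Proposition 4.6: for `u, v, w, y` in an associative 3-plane,
the matrices `u ∧ v` and `Ψ_{wy}` commute. -/
theorem stmt17 (P : Submodule ℝ E7) (hP : IsAssociative P)
    (u v w y : E7) (hu : u ∈ P) (hv : v ∈ P) (hw : w ∈ P) (hy : y ∈ P) :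
    wedgeM u v * PsiM w y - PsiM w y * wedgeM u v = 0 := by
  have hA : ∀ j, assocV w y v j = 0 := fun j => by
    rw [assoc_vanish P hP w hw y hy v hv]; rfl
  have hB : ∀ j, assocV w y u j = 0 := fun j => by
    rw [assoc_vanish P hP w hw y hy u hu]; rfl
  ext i j
  simp only [Matrix.sub_apply, Matrix.zero_apply, Matrix.mul_apply, wedgeM, PsiM,
    Matrix.of_apply]
  have T1 : ∑ k, (u i * v k - u k * v i) * (∑ p, ∑ q, w p * y q * psi7 p q k j)
      = u i * assocV w y v j - v i * assocV w y u j := by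
    calc ∑ k, (u i * v k - u k * v i) * (∑ p, ∑ q, w p * y q * psi7 p q k j)
        = ∑ k, (u i * (v k * (∑ p, ∑ q, w p * y q * psi7 p q k j))
            - v i * (u k * (∑ p, ∑ q, w p * y q * psi7 p q k j))) :=
          Finset.sum_congr rfl fun k _ => by ring
      _ = u i * (∑ k, v k * (∑ p, ∑ q, w p * y q * psi7 p q k j))
            - v i * (∑ k, u k * (∑ p, ∑ q, w p * y q * psi7 p q k j)) := by
          rw [Finset.sum_sub_distrib, Finset.mul_sum, Finset.mul_sum]
      _ = u i * assocV w y v j - v i * assocV w y u j := by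
          rw [psum_left, psum_left]
  have T2 : ∑ k, (∑ p, ∑ q, w p * y q * psi7 p q i k) * (u k * v j - u j * v k)
      = v j * (- assocV w y u i) - u j * (- assocV w y v i) := by
    calc ∑ k, (∑ p, ∑ q, w p * y q * psi7 p q i k) * (u k * v j - u j * v k)
        = ∑ k, (v j * ((∑ p, ∑ q, w p * y q * psi7 p q i k) * u k)
            - u j * ((∑ p, ∑ q, w p * y q * psi7 p q i k) * v k)) :=
          Finset.sum_congr rfl fun k _ => by ring
      _ = v j * (∑ k, (∑ p, ∑ q, w p * y q * psi7 p q i k) * u k)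
            - u j * (∑ k, (∑ p, ∑ q, w p * y q * psi7 p q i k) * v k) := by
          rw [Finset.sum_sub_distrib, Finset.mul_sum, Finset.mul_sum]
      _ = v j * (- assocV w y u i) - u j * (- assocV w y v i) := by
          rw [psum_right, psum_right]
  rw [T1, T2, hA, hB, hA, hB]
  ring

end
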